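/- Suppose p and q are odd, and ε+η ≡ n (mod 2). Then the number of reduced solutions for the data (n,k,u,v,p,q,ε,η) equals the binomial coefficient C(k−1, (p−1)/2) = C(k−1, (q−1)/2). -/

import Mathlib

/-- A *reduced solution* for the data `(n,k,u,v,p,q,ε,η)` (with `n = 2k+u+v`,
`p + q = 2k`): strictly decreasing positive integers `x_1 > … > x_q` and
`y_1 > … > y_p` whose underlying sets are disjoint with union `{u+v+1, …, n}`,
together with weakly decreasing nonnegative integers `b_1 ≥ … ≥ b_q ≥ 0`,
`a_1 ≥ … ≥ a_p ≥ 0` such that `x_i = (u+q+1−i) + η + 2b_i` and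
`y_m = (v+p−m) + ε + 2a_m` (written here with 0-based indices). -/
structure RedSol (n u v p q ε η : ℕ) where
  x : Fin q → ℤ
  y : Fin p → ℤ
  b : Fin q → ℤ
  a : Fin p → ℤ
  x_anti : StrictAnti x
  y_anti : StrictAnti y
  x_pos : ∀ i, 0 < x i
  y_pos : ∀ m, 0 < y m
  disj : Disjoint (Finset.univ.image x) (Finset.univ.image y)
  uni : Finset.univ.image x ∪ Finset.univ.image y =
    Finset.Icc ((u : ℤ) + v + 1) (n : ℤ)
  b_anti : Antitone b
  a_anti : Antitone a
  b_nonneg : ∀ i, 0 ≤ b i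
  a_nonneg : ∀ m, 0 ≤ a m
  hx : ∀ i : Fin q, x i = (u : ℤ) + q - i.1 + η + 2 * b i
  hy : ∀ m : Fin p, y m = (v : ℤ) + p - 1 - m.1 + ε + 2 * a m

open Finset

namespace RSAux

lemma gap_aux {L : ℕ} {e : Fin L → ℤ} (he : StrictAnti e) :
    ∀ (b : ℕ) (hb : b < L) (a : ℕ) (ha : a < L), a ≤ b →
      e ⟨b, hb⟩ + (b : ℤ) ≤ e ⟨a, ha⟩ + (a : ℤ) := by
  intro b
  induction b with
  | zero =>
    intro hb a ha hab
    have : a = 0 := by omega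
    subst this; rfl
  | succ b ih =>
    intro hb a ha hab
    rcases Nat.eq_or_lt_of_le hab with h | h
    · subst h; rfl
    · have hb' : b < L := by omega
      have h1 : e ⟨b+1, hb⟩ < e ⟨b, hb'⟩ := he (by simp [Fin.lt_def])
      have h2 := ih hb' a ha (by omega)
      push_cast
      push_cast at h2
      omega

lemma gap {L : ℕ} {e : Fin L → ℤ} (he : StrictAnti e) {i j : Fin L} (h : i ≤ j) :
    e j + (j.1 : ℤ) ≤ e i + (i.1 : ℤ) := by
  have := gap_aux he j.1 j.2 i.1 i.2 h
  simpa using this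

lemma count_above {L : ℕ} {e : Fin L → ℤ} (he : StrictAnti e) (w : ℤ) (j : Fin L)
    (hj : ∀ i, w < e i ↔ i < j) :
    ((Finset.univ.image e).filter (fun z => w < z)).card = j.1 := by
  rw [Finset.filter_image, Finset.card_image_of_injective _ he.injective]
  have : Finset.univ.filter (fun i => w < e i) = Finset.Iio j := by
    ext i; simp [hj]
  rw [this, Fin.card_Iio]

lemma strictAnti_eq_of_image_eq {L : ℕ} {f g : Fin L → ℤ} (hf : StrictAnti f)
    (hg : StrictAnti g) (h : Finset.univ.image f = Finset.univ.image g) : f = g := by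
  have hc : (Finset.univ.image f).card = L := by
    rw [Finset.card_image_of_injective _ hf.injective, Finset.card_univ, Fintype.card_fin]
  have hfm : StrictMono (fun i : Fin L => f i.rev) :=
    fun i j hij => hf (by simpa using hij)
  have hgm : StrictMono (fun i : Fin L => g i.rev) :=
    fun i j hij => hg (by simpa using hij)
  have h1 : (fun i : Fin L => f i.rev) = (Finset.univ.image f).orderEmbOfFin hc :=
    Finset.orderEmbOfFin_unique hc (fun i => Finset.mem_image_of_mem _ (Finset.mem_univ _)) hfm
  have h2 : (fun i : Fin L => g i.rev) = (Finset.univ.image f).orderEmbOfFin hc := by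
    refine Finset.orderEmbOfFin_unique hc (fun i => ?_) hgm
    rw [h]; exact Finset.mem_image_of_mem _ (Finset.mem_univ _)
  funext i
  have := congrFun (h1.trans h2.symm) i.rev
  simpa using this

lemma eq_zero_of_max {L : ℕ} {e : Fin L → ℤ} (he : StrictAnti e) (i : Fin L)
    (h : ∀ j, e j ≤ e i) : i.1 = 0 := by
  by_contra hne
  have h0 : (0 : ℕ) < L := by omega
  have : e i < e ⟨0, h0⟩ := he (by simp [Fin.lt_def]; omega)
  exact absurd (h ⟨0, h0⟩) (by omega)

lemma eq_last_of_min {L : ℕ} {e : Fin L → ℤ} (he : StrictAnti e) (i : Fin L)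
    (h : ∀ j, e i ≤ e j) : i.1 = L - 1 := by
  by_contra hne
  have hl : L - 1 < L := by omega
  have : e ⟨L-1, hl⟩ < e i := he (by simp [Fin.lt_def]; omega)
  exact absurd (h ⟨L-1, hl⟩) (by omega)

lemma seq_props {L : ℕ} {e : Fin L → ℤ} (he : StrictAnti e) (A : ℤ)
    (hpar : ∀ j : Fin L, (e j - A + j.1) % 2 = 0)
    (hmin : ∀ hL : 0 < L, A - ((L : ℤ) - 1) ≤ e ⟨L-1, by omega⟩) :
    (∀ j : Fin L, e j = A - j.1 + 2 * ((e j - A + j.1) / 2)) ∧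
    Antitone (fun j : Fin L => (e j - A + j.1) / 2) ∧
    (∀ j : Fin L, 0 ≤ (e j - A + j.1) / 2) := by
  refine ⟨fun j => by have := hpar j; omega, ?_, ?_⟩
  · intro i j hij
    have h1 := gap he hij
    have h2 := hpar i
    have h3 := hpar j
    simp only
    omega
  · intro j
    have hL : 0 < L := j.pos
    have h1 := gap he (show j ≤ ⟨L-1, by omega⟩ from by
      simp [Fin.le_def]; omega)
    have h2 := hpar j
    have h3 := hmin hL
    simp only at h1
    omega


/-- decreasing enumeration of a finset of naturals -/
def gd (S : Finset ℕ) (c : ℕ) (hc : S.card = c) (j : Fin c) : ℕ :=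
  S.orderEmbOfFin hc j.rev

lemma gd_anti (S : Finset ℕ) (c : ℕ) (hc : S.card = c) : StrictAnti (gd S c hc) :=
  fun i j hij => (S.orderEmbOfFin hc).strictMono (by simpa using hij)

lemma gd_mem (S : Finset ℕ) (c : ℕ) (hc : S.card = c) (j : Fin c) : gd S c hc j ∈ S :=
  Finset.orderEmbOfFin_mem S hc j.rev

/-- decreasing enumeration of the "pairs" part -/
def be (m : ℤ) (S : Finset ℕ) (c : ℕ) (hc : S.card = c) (j : Fin (2*c)) : ℤ :=
  m + 2 * (gd S c hc ⟨j.1 / 2, by omega⟩) + 1 - (j.1 % 2 : ℤ)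

lemma be_anti (m : ℤ) (S : Finset ℕ) (c : ℕ) (hc : S.card = c) :
    StrictAnti (be m S c hc) := by
  intro i j hij
  unfold be
  rcases Nat.lt_or_ge (i.1/2) (j.1/2) with h | h
  · have hg := gd_anti S c hc (show (⟨i.1/2, by omega⟩ : Fin c) < ⟨j.1/2, by omega⟩ from by
      simp [Fin.lt_def]; omega)
    have : (gd S c hc ⟨j.1/2, by omega⟩ : ℕ) < (gd S c hc ⟨i.1/2, by omega⟩ : ℕ) := hg
    have hi2 : i.1 % 2 ≤ 1 := by omega
    have hj2 : j.1 % 2 ≤ 1 := by omega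
    omega
  · have hij' : i.1 < j.1 := hij
    have heq : i.1/2 = j.1/2 := by omega
    have : gd S c hc ⟨i.1/2, by omega⟩ = gd S c hc ⟨j.1/2, by omega⟩ := by
      congr 1; exact Fin.ext heq
    rw [this]
    have : i.1 % 2 < j.1 % 2 := by omega
    omega

lemma be_spec (m : ℤ) (S : Finset ℕ) (c : ℕ) (hc : S.card = c) (j : Fin (2*c)) :
    ∃ i : ℕ, i ∈ S ∧ be m S c hc j = m + 2*i + 1 - (j.1 % 2 : ℤ) :=
  ⟨gd S c hc ⟨j.1/2, by omega⟩, gd_mem _ _ _ _, rfl⟩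

def pairsSet (m : ℤ) (S : Finset ℕ) : Finset ℤ :=
  S.biUnion fun i => {m + 2*i, m + 2*i + 1}

lemma mem_pairsSet {m : ℤ} {S : Finset ℕ} {w : ℤ} :
    w ∈ pairsSet m S ↔ ∃ i ∈ S, w = m + 2*i ∨ w = m + 2*i + 1 := by
  simp only [pairsSet, Finset.mem_biUnion, Finset.mem_insert, Finset.mem_singleton]

lemma pairsSet_card (m : ℤ) (S : Finset ℕ) : (pairsSet m S).card = 2 * S.card := by
  rw [pairsSet, Finset.card_biUnion]
  · rw [Finset.sum_congr rfl (g := fun _ => 2) (fun i _ => by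
      rw [Finset.card_insert_of_notMem (by simp), Finset.card_singleton])]
    simp [Nat.mul_comm]
  · intro i hi j hj hij
    simp only [Finset.disjoint_left, Finset.mem_insert, Finset.mem_singleton]
    rintro a (rfl | rfl) h <;> rcases h with h | h <;>
      [skip; skip; skip; skip] <;> omega

lemma be_image (m : ℤ) (S : Finset ℕ) (c : ℕ) (hc : S.card = c) :
    Finset.univ.image (be m S c hc) = pairsSet m S := by
  apply Finset.eq_of_subset_of_card_le
  · intro w hw
    rcases Finset.mem_image.1 hw with ⟨j, _, rfl⟩
    rcases be_spec m S c hc j with ⟨i, hi, hval⟩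
    rw [mem_pairsSet]
    exact ⟨i, hi, by omega⟩
  · rw [pairsSet_card, hc,
      Finset.card_image_of_injective _ (be_anti m S c hc).injective,
      Finset.card_univ, Fintype.card_fin]

/-- decreasing enumeration of a full slot set: endpoint plus pairs. -/
def sE (m : ℤ) (kk : ℕ) (z : Bool) (S : Finset ℕ) (c : ℕ) (hc : S.card = c) :
    Fin (2*c+1) → ℤ :=
  match z with
  | true => Fin.cases (m + 2*kk) (be m S c hc)
  | false => Fin.lastCases (m + 1) (fun j => be m S c hc j)

def slotSet (m : ℤ) (kk : ℕ) (z : Bool) (S : Finset ℕ) : Finset ℤ :=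
  (cond z {m + 2*kk} {m + 1}) ∪ pairsSet m S

lemma mem_slotSet {m : ℤ} {kk : ℕ} {z : Bool} {S : Finset ℕ} {w : ℤ} :
    w ∈ slotSet m kk z S ↔
      (w = (cond z (m + 2*kk) (m + 1)) ∨ ∃ i ∈ S, w = m + 2*i ∨ w = m + 2*i + 1) := by
  rcases z <;> simp [slotSet, mem_pairsSet]

lemma sE_anti (m : ℤ) (kk : ℕ) (z : Bool) (S : Finset ℕ) (c : ℕ) (hc : S.card = c)
    (hS : S ⊆ Finset.Icc 1 (kk-1)) (hk : 1 ≤ kk) :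
    StrictAnti (sE m kk z S c hc) := by
  have hbe := be_anti m S c hc
  have hub : ∀ j, be m S c hc j ≤ m + 2*kk - 1 := by
    intro j
    rcases be_spec m S c hc j with ⟨i, hi, hv⟩
    have := Finset.mem_Icc.1 (hS hi)
    have hj2 : j.1 % 2 ≤ 1 := by omega
    have : (i : ℤ) ≤ (kk : ℤ) - 1 := by
      have := this.2; omega
    omega
  have hlb : ∀ j, m + 2 ≤ be m S c hc j := by
    intro j
    rcases be_spec m S c hc j with ⟨i, hi, hv⟩
    have := (Finset.mem_Icc.1 (hS hi)).1
    have hj2 : j.1 % 2 ≤ 1 := by omega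
    have : (1 : ℤ) ≤ (i : ℤ) := by exact_mod_cast this
    omega
  rcases z with _ | _
  · -- z = false : lastCases
    intro i j hij
    simp only [sE]
    rcases Fin.eq_castSucc_or_eq_last i with ⟨i', rfl⟩ | rfl
    · rcases Fin.eq_castSucc_or_eq_last j with ⟨j', rfl⟩ | rfl
      · rw [Fin.lastCases_castSucc, Fin.lastCases_castSucc]
        exact hbe (Fin.castSucc_lt_castSucc_iff.1 hij)
      · rw [Fin.lastCases_castSucc, Fin.lastCases_last]
        have := hlb i'; omega
    · rcases Fin.eq_castSucc_or_eq_last j with ⟨j', rfl⟩ | rfl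
      · exact absurd hij (by simp [Fin.lt_def])
      · exact absurd hij (lt_irrefl _)
  · -- z = true : cases
    intro i j hij
    simp only [sE]
    rcases Fin.eq_zero_or_eq_succ i with rfl | ⟨i', rfl⟩
    · rcases Fin.eq_zero_or_eq_succ j with rfl | ⟨j', rfl⟩
      · exact absurd hij (lt_irrefl _)
      · rw [Fin.cases_zero, Fin.cases_succ]
        have := hub j'; omega
    · rcases Fin.eq_zero_or_eq_succ j with rfl | ⟨j', rfl⟩
      · exact absurd hij (by simp [Fin.lt_def])
      · rw [Fin.cases_succ, Fin.cases_succ]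
        exact hbe (Fin.succ_lt_succ_iff.1 hij)

lemma sE_spec (m : ℤ) (kk : ℕ) (z : Bool) (S : Finset ℕ) (c : ℕ) (hc : S.card = c)
    (hS : S ⊆ Finset.Icc 1 (kk-1)) (hk : 1 ≤ kk) (j : Fin (2*c+1)) :
    ∃ t : ℤ, sE m kk z S c hc j = m + t ∧ 1 ≤ t ∧ t ≤ 2*kk ∧
      (t + j.1 + (cond z 0 1)) % 2 = 0 ∧ (z = true → 2 ≤ t) := by
  have hbnd : ∀ (j' : Fin (2*c)), ∃ i : ℕ, 1 ≤ i ∧ (i : ℤ) ≤ (kk : ℤ) - 1 ∧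
      be m S c hc j' = m + (2*i + 1 - (j'.1 % 2 : ℤ)) := by
    intro j'
    rcases be_spec m S c hc j' with ⟨i, hi, hv⟩
    have h2 := Finset.mem_Icc.1 (hS hi)
    exact ⟨i, h2.1, by have := h2.2; omega, by omega⟩
  rcases z with _ | _
  · simp only [sE, Bool.cond_false]
    rcases Fin.eq_castSucc_or_eq_last j with ⟨j', rfl⟩ | rfl
    · rw [Fin.lastCases_castSucc]
      rcases hbnd j' with ⟨i, h1, h2, hv⟩
      refine ⟨2*i + 1 - (j'.1 % 2 : ℤ), hv, by omega, by omega, ?_, by simp⟩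
      have hcs : ((j'.castSucc).1 : ℤ) = (j'.1 : ℤ) := rfl
      rw [hcs]; omega
    · rw [Fin.lastCases_last]
      refine ⟨1, rfl, by omega, by omega, ?_, by simp⟩
      have hcs : ((Fin.last (2*c)).1 : ℤ) = (2*c : ℤ) := by simp
      rw [hcs]; omega
  · simp only [sE, Bool.cond_true]
    rcases Fin.eq_zero_or_eq_succ j with rfl | ⟨j', rfl⟩
    · refine ⟨2*kk, by rw [Fin.cases_zero], by omega, by omega, ?_, by omega⟩
      have hcs : (((0 : Fin (2*c+1))).1 : ℤ) = 0 := rfl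
      rw [hcs]; omega
    · rw [Fin.cases_succ]
      rcases hbnd j' with ⟨i, h1, h2, hv⟩
      refine ⟨2*i + 1 - (j'.1 % 2 : ℤ), hv, by omega, by omega, ?_, by omega⟩
      have hcs : ((j'.succ).1 : ℤ) = (j'.1 : ℤ) + 1 := by
        simp [Fin.val_succ]
      rw [hcs]; omega

lemma sE_image (m : ℤ) (kk : ℕ) (z : Bool) (S : Finset ℕ) (c : ℕ) (hc : S.card = c) :
    Finset.univ.image (sE m kk z S c hc) = slotSet m kk z S := by
  rcases z with _ | _
  · simp only [sE, slotSet]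
    ext w
    simp only [Finset.mem_image, Finset.mem_univ, true_and, Finset.mem_union,
      Finset.mem_singleton, Bool.cond_false, Bool.cond_true]
    constructor
    · rintro ⟨j, rfl⟩
      rcases Fin.eq_castSucc_or_eq_last j with ⟨j', rfl⟩ | rfl
      · rw [Fin.lastCases_castSucc]
        right
        rw [← be_image m S c hc]
        exact Finset.mem_image_of_mem _ (Finset.mem_univ _)
      · rw [Fin.lastCases_last]; left; rfl
    · rintro (rfl | hw)
      · exact ⟨Fin.last (2*c), by rw [Fin.lastCases_last]⟩
      · rw [← be_image m S c hc] at hw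
        rcases Finset.mem_image.1 hw with ⟨j', _, rfl⟩
        exact ⟨j'.castSucc, by rw [Fin.lastCases_castSucc]⟩
  · simp only [sE, if_pos rfl, slotSet]
    ext w
    simp only [Finset.mem_image, Finset.mem_univ, true_and, Finset.mem_union,
      Finset.mem_singleton, Bool.cond_false, Bool.cond_true]
    constructor
    · rintro ⟨j, rfl⟩
      rcases Fin.eq_zero_or_eq_succ j with rfl | ⟨j', rfl⟩
      · rw [Fin.cases_zero]; left; rfl
      · rw [Fin.cases_succ]
        right
        rw [← be_image m S c hc]
        exact Finset.mem_image_of_mem _ (Finset.mem_univ _)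
    · rintro (rfl | hw)
      · exact ⟨0, by rw [Fin.cases_zero]⟩
      · rw [← be_image m S c hc] at hw
        rcases Finset.mem_image.1 hw with ⟨j', _, rfl⟩
        exact ⟨j'.succ, by rw [Fin.cases_succ]⟩

lemma slotSet_card (m : ℤ) (kk : ℕ) (z : Bool) (S : Finset ℕ)
    (hS : S ⊆ Finset.Icc 1 (kk-1)) (hk : 1 ≤ kk) :
    (slotSet m kk z S).card = 2 * S.card + 1 := by
  rw [slotSet, Finset.card_union_of_disjoint, pairsSet_card]
  · rcases z <;> simp [Nat.add_comm]
  · rw [Finset.disjoint_left]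
    intro w hw hw'
    rcases mem_pairsSet.1 hw' with ⟨i, hi, hv⟩
    have := Finset.mem_Icc.1 (hS hi)
    have h1 : 1 ≤ i := this.1
    have h2 : (i:ℤ) ≤ (kk:ℤ) - 1 := by have := this.2; omega
    rcases z <;> simp at hw <;> omega

lemma slotSet_disjoint (m : ℤ) (kk : ℕ) (z : Bool) (S S' : Finset ℕ)
    (hS : S ⊆ Finset.Icc 1 (kk-1)) (hS' : S' ⊆ Finset.Icc 1 (kk-1))
    (hdisj : Disjoint S S') (hk : 1 ≤ kk) :
    Disjoint (slotSet m kk z S) (slotSet m kk (!z) S') := by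
  rw [Finset.disjoint_left]
  intro w hw hw'
  rcases mem_slotSet.1 hw with h1 | ⟨i, hi, hv⟩ <;>
    rcases mem_slotSet.1 hw' with h2 | ⟨i', hi', hv'⟩
  · rcases z <;> simp at h1 h2 <;> omega
  · have hm := Finset.mem_Icc.1 (hS' hi')
    have : (1:ℤ) ≤ i' ∧ (i':ℤ) ≤ (kk:ℤ) - 1 := by
      constructor
      · exact_mod_cast hm.1
      · have := hm.2; omega
    rcases z <;> simp at h1 <;> omega
  · have hm := Finset.mem_Icc.1 (hS hi)
    have : (1:ℤ) ≤ i ∧ (i:ℤ) ≤ (kk:ℤ) - 1 := by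
      constructor <;> [exact_mod_cast hm.1; omega]
    rcases z <;> simp at h2 <;> omega
  · have : i = i' := by omega
    subst this
    exact Finset.disjoint_left.1 hdisj hi hi'

lemma slotSet_union (m : ℤ) (kk : ℕ) (z : Bool) (S S' : Finset ℕ)
    (hS : S ⊆ Finset.Icc 1 (kk-1)) (hS' : S' ⊆ Finset.Icc 1 (kk-1))
    (hdisj : Disjoint S S') (huni : S ∪ S' = Finset.Icc 1 (kk-1)) (hk : 1 ≤ kk) :
    slotSet m kk z S ∪ slotSet m kk (!z) S' = Finset.Icc (m+1) (m + 2*kk) := by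
  apply Finset.eq_of_subset_of_card_le
  · intro w hw
    rw [Finset.mem_Icc]
    rcases Finset.mem_union.1 hw with h | h <;>
      rcases mem_slotSet.1 h with h1 | ⟨i, hi, hv⟩
    · rcases z <;> simp at h1 <;> omega
    · have hm := Finset.mem_Icc.1 (hS hi)
      have : (1:ℤ) ≤ i ∧ (i:ℤ) ≤ (kk:ℤ) - 1 := by
        constructor <;> [exact_mod_cast hm.1; omega]
      omega
    · rcases z <;> simp at h1 <;> omega
    · have hm := Finset.mem_Icc.1 (hS' hi)
      have : (1:ℤ) ≤ i ∧ (i:ℤ) ≤ (kk:ℤ) - 1 := by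
        constructor <;> [exact_mod_cast hm.1; omega]
      omega
  · rw [Finset.card_union_of_disjoint (slotSet_disjoint m kk z S S' hS hS' hdisj hk),
      slotSet_card m kk z S hS hk, slotSet_card m kk (!z) S' hS' hk]
    have hcards : S.card + S'.card = kk - 1 := by
      rw [← Finset.card_union_of_disjoint hdisj, huni, Nat.card_Icc]
      omega
    rw [Int.card_Icc]
    omega



def TYs (k : ℕ) (T : Finset (Fin (k-1))) : Finset ℕ := T.image (fun i => i.1+1)

def TXs (k : ℕ) (T : Finset (Fin (k-1))) : Finset ℕ := Finset.Icc 1 (k-1) \ TYs k T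

lemma TYs_sub (k : ℕ) (T : Finset (Fin (k-1))) : TYs k T ⊆ Finset.Icc 1 (k-1) := by
  intro j hj
  rcases Finset.mem_image.1 hj with ⟨i, _, rfl⟩
  have := i.2
  rw [Finset.mem_Icc]
  omega

lemma TYs_card (k r : ℕ) (T : Finset (Fin (k-1))) (hT : T.card = r) :
    (TYs k T).card = r := by
  rw [TYs, Finset.card_image_of_injective _ (fun a b h => Fin.ext (by omega)), hT]

lemma TXs_sub (k : ℕ) (T : Finset (Fin (k-1))) : TXs k T ⊆ Finset.Icc 1 (k-1) :=
  Finset.sdiff_subset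

lemma TXs_card (k r s : ℕ) (T : Finset (Fin (k-1))) (hT : T.card = r)
    (hrs : r + s + 1 = k) : (TXs k T).card = s := by
  rw [TXs, Finset.card_sdiff_of_subset (TYs_sub k T), Nat.card_Icc, TYs_card k r T hT]
  omega

lemma TXY_disj (k : ℕ) (T : Finset (Fin (k-1))) : Disjoint (TXs k T) (TYs k T) :=
  Finset.sdiff_disjoint

lemma TXY_union (k : ℕ) (T : Finset (Fin (k-1))) :
    TXs k T ∪ TYs k T = Finset.Icc 1 (k-1) := by
  rw [TXs, Finset.sdiff_union_self_eq_union, Finset.union_eq_left.2 (TYs_sub k T)]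

lemma mem_TYs (k : ℕ) (T : Finset (Fin (k-1))) (i : Fin (k-1)) :
    i.1 + 1 ∈ TYs k T ↔ i ∈ T := by
  rw [TYs, Finset.mem_image]
  constructor
  · rintro ⟨a, ha, h⟩
    have : a = i := Fin.ext (by omega)
    rwa [← this]
  · intro h; exact ⟨i, h, rfl⟩

def yF (k u v r : ℕ) (z : Bool) (T : Finset (Fin (k-1))) (hT : T.card = r) :
    Fin (2*r+1) → ℤ :=
  sE ((u:ℤ)+v) k z (TYs k T) r (TYs_card k r T hT)

def xF (k u v r s : ℕ) (z : Bool) (hrs : r + s + 1 = k) (T : Finset (Fin (k-1)))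
    (hT : T.card = r) : Fin (2*s+1) → ℤ :=
  sE ((u:ℤ)+v) k (!z) (TXs k T) s (TXs_card k r s T hT hrs)

lemma yF_anti (k u v r : ℕ) (z : Bool) (hk : 1 ≤ k) (T : Finset (Fin (k-1)))
    (hT : T.card = r) : StrictAnti (yF k u v r z T hT) :=
  sE_anti _ _ _ _ _ _ (TYs_sub k T) hk

lemma xF_anti (k u v r s : ℕ) (z : Bool) (hk : 1 ≤ k) (hrs : r + s + 1 = k)
    (T : Finset (Fin (k-1))) (hT : T.card = r) :
    StrictAnti (xF k u v r s z hrs T hT) :=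
  sE_anti _ _ _ _ _ _ (TXs_sub k T) hk

lemma yF_spec (k u v r : ℕ) (z : Bool) (hk : 1 ≤ k) (T : Finset (Fin (k-1)))
    (hT : T.card = r) (j : Fin (2*r+1)) :
    ∃ t : ℤ, yF k u v r z T hT j = (u:ℤ) + v + t ∧ 1 ≤ t ∧ t ≤ 2*k ∧
      (t + j.1 + (cond z 0 1)) % 2 = 0 ∧ (z = true → 2 ≤ t) :=
  sE_spec _ _ _ _ _ _ (TYs_sub k T) hk j

lemma xF_spec (k u v r s : ℕ) (z : Bool) (hk : 1 ≤ k) (hrs : r + s + 1 = k)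
    (T : Finset (Fin (k-1))) (hT : T.card = r) (i : Fin (2*s+1)) :
    ∃ t : ℤ, xF k u v r s z hrs T hT i = (u:ℤ) + v + t ∧ 1 ≤ t ∧ t ≤ 2*k ∧
      (t + i.1 + (cond (!z) 0 1)) % 2 = 0 ∧ ((!z) = true → 2 ≤ t) :=
  sE_spec _ _ _ _ _ _ (TXs_sub k T) hk i

lemma xF_seq (k u v r s η : ℕ) (z : Bool) (hk : 1 ≤ k) (hrs : r + s + 1 = k)
    (hη : η ≤ 1) (hz : z = true ↔ v % 2 = η % 2)
    (T : Finset (Fin (k-1))) (hT : T.card = r) :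
    (∀ i : Fin (2*s+1), xF k u v r s z hrs T hT i =
        ((u:ℤ) + ((2*s+1 : ℕ) : ℤ) + η) - i.1 +
          2 * ((xF k u v r s z hrs T hT i - ((u:ℤ) + ((2*s+1 : ℕ) : ℤ) + η) + i.1) / 2)) ∧
    Antitone (fun i : Fin (2*s+1) =>
        (xF k u v r s z hrs T hT i - ((u:ℤ) + ((2*s+1 : ℕ) : ℤ) + η) + i.1) / 2) ∧
    (∀ i : Fin (2*s+1),
        0 ≤ (xF k u v r s z hrs T hT i - ((u:ℤ) + ((2*s+1 : ℕ) : ℤ) + η) + i.1) / 2) := by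
  refine seq_props (xF_anti k u v r s z hk hrs T hT) _ ?_ ?_
  · intro i
    rcases xF_spec k u v r s z hk hrs T hT i with ⟨t, hv, h1, h2, hp, h3⟩
    have hcx : (cond (!z) 0 1 : ℤ) = cond z 1 0 := by cases z <;> rfl
    have hFx : ((v:ℤ) + 1 + η + cond z 1 0) % 2 = 0 := by
      rcases z with _ | _
      · simp only [Bool.cond_false]
        simp at hz
        omega
      · simp only [Bool.cond_true]
        simp at hz
        omega
    rw [hcx] at hp
    push_cast
    push_cast at hv
    omega
  · intro hL
    rcases xF_spec k u v r s z hk hrs T hT ⟨2*s+1-1, by omega⟩ with ⟨t, hv, h1, h2, hp, h3⟩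
    have h3' : z = false → 2 ≤ t := by
      intro h; exact h3 (by rw [h]; rfl)
    rcases z with _ | _
    · have := h3' rfl
      push_cast
      push_cast at hv
      omega
    · simp at hz
      push_cast
      push_cast at hv
      omega

lemma yF_seq (k u v r ε η : ℕ) (z : Bool) (hk : 1 ≤ k)
    (hε : ε ≤ 1) (hη : η ≤ 1) (hmod : (ε + η) % 2 = (u + v) % 2)
    (hz : z = true ↔ v % 2 = η % 2)
    (T : Finset (Fin (k-1))) (hT : T.card = r) :
    (∀ j : Fin (2*r+1), yF k u v r z T hT j =
        ((v:ℤ) + ((2*r+1 : ℕ) : ℤ) - 1 + ε) - j.1 +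
          2 * ((yF k u v r z T hT j - ((v:ℤ) + ((2*r+1 : ℕ) : ℤ) - 1 + ε) + j.1) / 2)) ∧
    Antitone (fun j : Fin (2*r+1) =>
        (yF k u v r z T hT j - ((v:ℤ) + ((2*r+1 : ℕ) : ℤ) - 1 + ε) + j.1) / 2) ∧
    (∀ j : Fin (2*r+1),
        0 ≤ (yF k u v r z T hT j - ((v:ℤ) + ((2*r+1 : ℕ) : ℤ) - 1 + ε) + j.1) / 2) := by
  refine seq_props (yF_anti k u v r z hk T hT) _ ?_ ?_
  · intro j
    rcases yF_spec k u v r z hk T hT j with ⟨t, hv, h1, h2, hp, h3⟩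
    have hFy : ((u:ℤ) + ε + cond z 0 1) % 2 = 0 := by
      rcases z with _ | _
      · simp only [Bool.cond_false]
        simp at hz
        omega
      · simp only [Bool.cond_true]
        simp at hz
        omega
    push_cast
    push_cast at hv
    omega
  · intro hL
    rcases yF_spec k u v r z hk T hT ⟨2*r+1-1, by omega⟩ with ⟨t, hv, h1, h2, hp, h3⟩
    push_cast
    push_cast at hv
    omega

def mkSol (k u v r s ε η : ℕ) (z : Bool) (hk : 1 ≤ k) (hrs : r + s + 1 = k)
    (hε : ε ≤ 1) (hη : η ≤ 1) (hmod : (ε + η) % 2 = (u + v) % 2)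
    (hz : z = true ↔ v % 2 = η % 2)
    (T : Finset (Fin (k-1))) (hT : T.card = r) :
    RedSol (2*k+u+v) u v (2*r+1) (2*s+1) ε η where
  x := xF k u v r s z hrs T hT
  y := yF k u v r z T hT
  b := fun i => (xF k u v r s z hrs T hT i - ((u:ℤ) + ((2*s+1 : ℕ) : ℤ) + η) + i.1) / 2
  a := fun j => (yF k u v r z T hT j - ((v:ℤ) + ((2*r+1 : ℕ) : ℤ) - 1 + ε) + j.1) / 2
  x_anti := xF_anti k u v r s z hk hrs T hT
  y_anti := yF_anti k u v r z hk T hT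
  x_pos := by
    intro i
    rcases xF_spec k u v r s z hk hrs T hT i with ⟨t, hv, h1, -⟩
    rw [hv]; positivity
  y_pos := by
    intro j
    rcases yF_spec k u v r z hk T hT j with ⟨t, hv, h1, -⟩
    rw [hv]; positivity
  disj := by
    rw [show Finset.univ.image (xF k u v r s z hrs T hT) =
        slotSet ((u:ℤ)+v) k (!z) (TXs k T) from sE_image _ _ _ _ _ _,
      show Finset.univ.image (yF k u v r z T hT) =
        slotSet ((u:ℤ)+v) k z (TYs k T) from sE_image _ _ _ _ _ _]
    have := slotSet_disjoint ((u:ℤ)+v) k (!z) (TXs k T) (TYs k T)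
      (TXs_sub k T) (TYs_sub k T) (TXY_disj k T) hk
    simpa [Bool.not_not] using this
  uni := by
    rw [show Finset.univ.image (xF k u v r s z hrs T hT) =
        slotSet ((u:ℤ)+v) k (!z) (TXs k T) from sE_image _ _ _ _ _ _,
      show Finset.univ.image (yF k u v r z T hT) =
        slotSet ((u:ℤ)+v) k z (TYs k T) from sE_image _ _ _ _ _ _]
    have h := slotSet_union ((u:ℤ)+v) k (!z) (TXs k T) (TYs k T)
      (TXs_sub k T) (TYs_sub k T) (TXY_disj k T) (TXY_union k T) hk
    rw [show slotSet ((u:ℤ)+v) k (!(!z)) (TYs k T) = slotSet ((u:ℤ)+v) k z (TYs k T) from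
      by rw [Bool.not_not]] at h
    rw [h]
    congr 1
    push_cast
    ring
  b_anti := (xF_seq k u v r s η z hk hrs hη hz T hT).2.1
  a_anti := (yF_seq k u v r ε η z hk hε hη hmod hz T hT).2.1
  b_nonneg := (xF_seq k u v r s η z hk hrs hη hz T hT).2.2
  a_nonneg := (yF_seq k u v r ε η z hk hε hη hmod hz T hT).2.2
  hx := by
    intro i
    have h := (xF_seq k u v r s η z hk hrs hη hz T hT).1 i
    push_cast
    push_cast at h
    omega
  hy := by
    intro j
    have h := (yF_seq k u v r ε η z hk hε hη hmod hz T hT).1 j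
    push_cast
    push_cast at h
    omega


section sol

variable {k u v r s ε η : ℕ} {z : Bool}
variable (sol : RedSol (2*k+u+v) u v (2*r+1) (2*s+1) ε η)

lemma hIcc (sol : RedSol (2*k+u+v) u v (2*r+1) (2*s+1) ε η) :
    Finset.univ.image sol.x ∪ Finset.univ.image sol.y =
      Finset.Icc ((u:ℤ)+v+1) ((u:ℤ)+v+2*k) := by
  rw [sol.uni]
  congr 1
  push_cast
  ring

lemma y_bounds (j : Fin (2*r+1)) :
    (u:ℤ)+v+1 ≤ sol.y j ∧ sol.y j ≤ (u:ℤ)+v+2*k := by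
  have : sol.y j ∈ Finset.Icc ((u:ℤ)+v+1) ((u:ℤ)+v+2*k) := by
    rw [← hIcc sol]
    exact Finset.mem_union_right _ (Finset.mem_image_of_mem _ (Finset.mem_univ _))
  exact Finset.mem_Icc.1 this

lemma x_bounds (i : Fin (2*s+1)) :
    (u:ℤ)+v+1 ≤ sol.x i ∧ sol.x i ≤ (u:ℤ)+v+2*k := by
  have : sol.x i ∈ Finset.Icc ((u:ℤ)+v+1) ((u:ℤ)+v+2*k) := by
    rw [← hIcc sol]
    exact Finset.mem_union_left _ (Finset.mem_image_of_mem _ (Finset.mem_univ _))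
  exact Finset.mem_Icc.1 this

lemma count_split (w : ℤ) :
    ((Finset.Icc ((u:ℤ)+v+1) ((u:ℤ)+v+2*k)).filter (fun y => w < y)).card =
      ((Finset.univ.image sol.x).filter (fun y => w < y)).card +
      ((Finset.univ.image sol.y).filter (fun y => w < y)).card := by
  rw [← hIcc sol, Finset.filter_union,
    Finset.card_union_of_disjoint (Finset.disjoint_filter_filter sol.disj)]

lemma count_Icc (w : ℤ) (hw : (u:ℤ)+v ≤ w) :
    (((Finset.Icc ((u:ℤ)+v+1) ((u:ℤ)+v+2*k)).filter (fun y => w < y)).card : ℤ) =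
      max ((u:ℤ)+v+2*k - w) 0 := by
  have h : (Finset.Icc ((u:ℤ)+v+1) ((u:ℤ)+v+2*k)).filter (fun y => w < y) =
      Finset.Icc (w+1) ((u:ℤ)+v+2*k) := by
    ext y
    simp only [Finset.mem_filter, Finset.mem_Icc]
    omega
  rw [h, Int.card_Icc]
  omega

/-- the pair lemma: slots `2i` and `2i+1` get the same colour. -/
lemma pair_lem (hmod : (ε + η) % 2 = (u + v) % 2) (i : ℕ) (h1 : 1 ≤ i) (h2 : i ≤ k-1)
    (hk : 1 ≤ k) (hrs : r + s + 1 = k) :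
    (((u:ℤ)+v+2*i) ∈ Finset.univ.image sol.y ↔
      ((u:ℤ)+v+2*i+1) ∈ Finset.univ.image sol.y) := by
  have hIcc' := hIcc sol
  have hmem : ∀ w : ℤ, (u:ℤ)+v+1 ≤ w → w ≤ (u:ℤ)+v+2*k →
      w ∉ Finset.univ.image sol.y → w ∈ Finset.univ.image sol.x := by
    intro w hw1 hw2 hw3
    have : w ∈ Finset.univ.image sol.x ∪ Finset.univ.image sol.y := by
      rw [hIcc']; rw [Finset.mem_Icc]; exact ⟨hw1, hw2⟩
    rcases Finset.mem_union.1 this with h | h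
    · exact h
    · exact absurd h hw3
  have hik : (i:ℤ) ≤ (k:ℤ) - 1 := by omega
  constructor
  · intro hw
    by_contra hcon
    have hX : ((u:ℤ)+v+2*i+1) ∈ Finset.univ.image sol.x :=
      hmem _ (by omega) (by omega) hcon
    rcases Finset.mem_image.1 hX with ⟨a, -, ha⟩
    rcases Finset.mem_image.1 hw with ⟨b, -, hb⟩
    have ca : ((Finset.univ.image sol.x).filter
        (fun y => (u:ℤ)+v+2*i+1 < y)).card = a.1 := by
      refine count_above sol.x_anti _ a (fun i' => ?_)
      rw [← ha]
      exact sol.x_anti.lt_iff_gt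
    have cb : ((Finset.univ.image sol.y).filter
        (fun y => (u:ℤ)+v+2*i+1 < y)).card = b.1 := by
      refine count_above sol.y_anti _ b (fun j' => ?_)
      constructor
      · intro h
        have : sol.y b < sol.y j' := by omega
        exact sol.y_anti.lt_iff_gt.1 this
      · intro h
        have hlt : sol.y b < sol.y j' := sol.y_anti h
        have hne : sol.y j' ≠ (u:ℤ)+v+2*i+1 := by
          intro hh
          exact hcon (by rw [← hh]; exact Finset.mem_image_of_mem _ (Finset.mem_univ _))
        omega
    have csum := count_split sol ((u:ℤ)+v+2*i+1)
    have cicc := count_Icc (k := k) (u := u) (v := v) ((u:ℤ)+v+2*i+1) (by omega)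
    rw [csum, ca, cb] at cicc
    have e1 := sol.hx a
    have e2 := sol.hy b
    have ha2 := a.2
    have hb2 := b.2
    push_cast at cicc e1 e2 ⊢
    omega
  · intro hw
    by_contra hcon
    have hX : ((u:ℤ)+v+2*i) ∈ Finset.univ.image sol.x :=
      hmem _ (by omega) (by omega) hcon
    rcases Finset.mem_image.1 hX with ⟨a, -, ha⟩
    rcases Finset.mem_image.1 hw with ⟨b, -, hb⟩
    have cb : ((Finset.univ.image sol.y).filter
        (fun y => (u:ℤ)+v+2*i+1 < y)).card = b.1 := by
      refine count_above sol.y_anti _ b (fun j' => ?_)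
      rw [← hb]
      exact sol.y_anti.lt_iff_gt
    have ca : ((Finset.univ.image sol.x).filter
        (fun y => (u:ℤ)+v+2*i+1 < y)).card = a.1 := by
      refine count_above sol.x_anti _ a (fun i' => ?_)
      constructor
      · intro h
        have : sol.x a < sol.x i' := by omega
        exact sol.x_anti.lt_iff_gt.1 this
      · intro h
        have hlt : sol.x a < sol.x i' := sol.x_anti h
        have hne : sol.x i' ≠ (u:ℤ)+v+2*i+1 := by
          intro hh
          have : ((u:ℤ)+v+2*i+1) ∈ Finset.univ.image sol.x := by
            rw [← hh]; exact Finset.mem_image_of_mem _ (Finset.mem_univ _)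
          exact (Finset.disjoint_left.1 sol.disj this) hw
        omega
    have csum := count_split sol ((u:ℤ)+v+2*i+1)
    have cicc := count_Icc (k := k) (u := u) (v := v) ((u:ℤ)+v+2*i+1) (by omega)
    rw [csum, ca, cb] at cicc
    have e1 := sol.hx a
    have e2 := sol.hy b
    push_cast at cicc e1 e2 ⊢
    omega

lemma top_lem (hmod : (ε + η) % 2 = (u + v) % 2) (hz : z = true ↔ v % 2 = η % 2)
    (hk : 1 ≤ k) (hrs : r + s + 1 = k) :
    (((u:ℤ)+v+2*k) ∈ Finset.univ.image sol.y ↔ z = true) := by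
  constructor
  · intro hw
    rcases Finset.mem_image.1 hw with ⟨b, -, hb⟩
    have hb0 : b.1 = 0 := by
      refine eq_zero_of_max sol.y_anti b (fun j => ?_)
      have := (y_bounds sol j).2
      omega
    have e2 := sol.hy b
    rw [hb0] at e2
    rcases z with _ | _
    · exfalso
      simp at hz
      push_cast at e2
      omega
    · rfl
  · intro hzt
    by_contra hcon
    have hX : ((u:ℤ)+v+2*k) ∈ Finset.univ.image sol.x := by
      have : ((u:ℤ)+v+2*k) ∈ Finset.univ.image sol.x ∪ Finset.univ.image sol.y := by
        rw [hIcc sol, Finset.mem_Icc]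
        constructor <;> push_cast <;> omega
      rcases Finset.mem_union.1 this with h | h
      · exact h
      · exact absurd h hcon
    rcases Finset.mem_image.1 hX with ⟨a, -, ha⟩
    have ha0 : a.1 = 0 := by
      refine eq_zero_of_max sol.x_anti a (fun i => ?_)
      have := (x_bounds sol i).2
      omega
    have e1 := sol.hx a
    rw [ha0] at e1
    rw [hzt] at hz
    simp at hz
    push_cast at e1
    omega

lemma bot_lem (hmod : (ε + η) % 2 = (u + v) % 2) (hz : z = true ↔ v % 2 = η % 2)
    (hk : 1 ≤ k) (hrs : r + s + 1 = k) :
    (((u:ℤ)+v+1) ∈ Finset.univ.image sol.y ↔ z = false) := by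
  constructor
  · intro hw
    rcases Finset.mem_image.1 hw with ⟨b, -, hb⟩
    have hbl : b.1 = 2*r+1-1 := by
      refine eq_last_of_min sol.y_anti b (fun j => ?_)
      have := (y_bounds sol j).1
      omega
    have e2 := sol.hy b
    rw [hbl] at e2
    rcases z with _ | _
    · rfl
    · exfalso
      simp at hz
      push_cast at e2
      omega
  · intro hzf
    by_contra hcon
    have hX : ((u:ℤ)+v+1) ∈ Finset.univ.image sol.x := by
      have : ((u:ℤ)+v+1) ∈ Finset.univ.image sol.x ∪ Finset.univ.image sol.y := by
        rw [hIcc sol, Finset.mem_Icc]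
        constructor <;> push_cast <;> omega
      rcases Finset.mem_union.1 this with h | h
      · exact h
      · exact absurd h hcon
    rcases Finset.mem_image.1 hX with ⟨a, -, ha⟩
    have hal : a.1 = 2*s+1-1 := by
      refine eq_last_of_min sol.x_anti a (fun i => ?_)
      have := (x_bounds sol i).1
      omega
    have e1 := sol.hx a
    rw [hal] at e1
    rw [hzf] at hz
    simp at hz
    push_cast at e1
    omega

/-- the set `T` extracted from a solution -/
def Tof (sol : RedSol (2*k+u+v) u v (2*r+1) (2*s+1) ε η) : Finset (Fin (k-1)) :=
  Finset.univ.filter (fun i : Fin (k-1) =>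
    ((u:ℤ)+v+2*(i.1+1)) ∈ Finset.univ.image sol.y)

lemma img_eq (hmod : (ε + η) % 2 = (u + v) % 2) (hz : z = true ↔ v % 2 = η % 2)
    (hk : 1 ≤ k) (hrs : r + s + 1 = k) :
    Finset.univ.image sol.y = slotSet ((u:ℤ)+v) k z (TYs k (Tof sol)) := by
  have hmemTY : ∀ i0 : ℕ, i0 ∈ TYs k (Tof sol) ↔
      (1 ≤ i0 ∧ i0 ≤ k-1 ∧ ((u:ℤ)+v+2*i0) ∈ Finset.univ.image sol.y) := by
    intro i0
    constructor
    · intro h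
      rcases Finset.mem_image.1 h with ⟨i, hi, rfl⟩
      have hi2 := i.2
      have := (Finset.mem_filter.1 hi).2
      refine ⟨by omega, by omega, ?_⟩
      rw [show ((u:ℤ)+v+2*((i.1+1 : ℕ) : ℤ)) = (u:ℤ)+v+2*((i.1 : ℤ)+1) from by
        push_cast; ring]
      exact this
    · rintro ⟨ha, hb, hc⟩
      have : (⟨i0 - 1, by omega⟩ : Fin (k-1)) ∈ Tof sol := by
        rw [Tof, Finset.mem_filter]
        refine ⟨Finset.mem_univ _, ?_⟩
        convert hc using 3
        push_cast
        omega
      have h2 : (⟨i0 - 1, by omega⟩ : Fin (k-1)).1 + 1 ∈ TYs k (Tof sol) :=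
        (mem_TYs _ _ _).2 this
      simpa [Nat.sub_add_cancel ha] using h2
  ext w
  constructor
  · intro hw
    have hb' := Finset.mem_image.1 hw
    rcases hb' with ⟨b, -, rfl⟩
    have hbd := y_bounds sol b
    rw [mem_slotSet]
    -- write sol.y b = u+v+t with t : ℕ
    obtain ⟨t, ht, h1t, h2t⟩ : ∃ t : ℕ, sol.y b = (u:ℤ)+v+t ∧ 1 ≤ t ∧ t ≤ 2*k := by
      refine ⟨(sol.y b - ((u:ℤ)+v)).toNat, by omega, by omega, by omega⟩
    rcases Nat.eq_or_lt_of_le h1t with h | h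
    · -- t = 1
      have hzf : z = false := (bot_lem sol hmod hz hk hrs).1
        (by rw [show ((u:ℤ)+v+1) = sol.y b from by omega]; exact hw)
      left
      rw [hzf]
      simp only [Bool.cond_false]
      omega
    · rcases Nat.eq_or_lt_of_le h2t with h' | h'
      · -- t = 2k
        have hzt : z = true := (top_lem sol hmod hz hk hrs).1
          (by rw [show ((u:ℤ)+v+2*(k:ℤ)) = sol.y b from by omega]; exact hw)
        left
        rw [hzt]
        simp only [Bool.cond_true]
        omega
      · -- 2 ≤ t ≤ 2k-1
        right
        rcases Nat.even_or_odd t with ⟨c, hc⟩ | ⟨c, hc⟩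
        · refine ⟨c, ?_, Or.inl (by rw [ht, hc]; push_cast; ring)⟩
          rw [hmemTY]
          refine ⟨by omega, by omega, ?_⟩
          have : (u:ℤ)+v+2*c = sol.y b := by rw [ht, hc]; push_cast; ring
          rw [this]; exact hw
        · refine ⟨c, ?_, Or.inr (by rw [ht, hc]; push_cast; ring)⟩
          rw [hmemTY]
          refine ⟨by omega, by omega, ?_⟩
          have heq : (u:ℤ)+v+2*c+1 = sol.y b := by rw [ht, hc]; push_cast; ring
          refine (pair_lem sol hmod c (by omega) (by omega) hk hrs).2 ?_
          rw [heq]; exact hw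
  · intro hw
    rcases mem_slotSet.1 hw with h | ⟨i0, hi0, hv⟩
    · rcases z with _ | _
      · simp only [Bool.cond_false] at h
        rw [h]
        exact (bot_lem sol hmod hz hk hrs).2 rfl
      · simp only [Bool.cond_true] at h
        rw [h]
        exact (top_lem sol hmod hz hk hrs).2 rfl
    · rw [hmemTY] at hi0
      rcases hi0 with ⟨ha, hb, hc⟩
      rcases hv with rfl | rfl
      · exact hc
      · exact (pair_lem sol hmod i0 ha hb hk hrs).1 hc

lemma Tof_card (hmod : (ε + η) % 2 = (u + v) % 2) (hz : z = true ↔ v % 2 = η % 2)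
    (hk : 1 ≤ k) (hrs : r + s + 1 = k) : (Tof sol).card = r := by
  have h1 : (Finset.univ.image sol.y).card = 2*r+1 := by
    rw [Finset.card_image_of_injective _ sol.y_anti.injective, Finset.card_univ,
      Fintype.card_fin]
  rw [img_eq sol hmod hz hk hrs] at h1
  rw [slotSet_card _ _ _ _ (TYs_sub _ _) hk] at h1
  have h2 : (TYs k (Tof sol)).card = (Tof sol).card := by
    rw [TYs, Finset.card_image_of_injective _ (fun a b h => Fin.ext (by omega))]
  omega

end sol


lemma RedSol_ext {n u v p q ε η : ℕ} {s1 s2 : RedSol n u v p q ε η}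
    (hx : s1.x = s2.x) (hy : s1.y = s2.y) (hb : s1.b = s2.b) (ha : s1.a = s2.a) :
    s1 = s2 := by
  cases s1; cases s2
  simp only at hx hy hb ha
  subst hx; subst hy; subst hb; subst ha
  rfl

lemma compl_eq {A B A' B' U : Finset ℤ} (h1 : A ∪ B = U) (h2 : A' ∪ B' = U)
    (d1 : Disjoint A B) (d2 : Disjoint A' B') (hBB : B = B') : A = A' := by
  subst hBB
  ext w
  constructor
  · intro hw
    have : w ∈ A' ∪ B := by rw [h2, ← h1]; exact Finset.mem_union_left _ hw
    rcases Finset.mem_union.1 this with h | h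
    · exact h
    · exact absurd h (Finset.disjoint_left.1 d1 hw)
  · intro hw
    have : w ∈ A ∪ B := by rw [h1, ← h2]; exact Finset.mem_union_left _ hw
    rcases Finset.mem_union.1 this with h | h
    · exact h
    · exact absurd h (Finset.disjoint_left.1 d2 hw)

lemma mem_slot_pair (k u v : ℕ) (z : Bool) (hk : 1 ≤ k) (T : Finset (Fin (k-1)))
    (i : Fin (k-1)) :
    ((u:ℤ)+v+2*((i.1+1 : ℕ) : ℤ)) ∈ slotSet ((u:ℤ)+v) k z (TYs k T) ↔ i ∈ T := by
  rw [mem_slotSet]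
  constructor
  · rintro (h | ⟨i0, hi0, hv⟩)
    · exfalso
      have := i.2
      rcases z with _ | _ <;>
        simp only [Bool.cond_false, Bool.cond_true] at h <;> push_cast at h <;> omega
    · have hsub := TYs_sub k T hi0
      rw [Finset.mem_Icc] at hsub
      have : i0 = i.1 + 1 := by push_cast at hv; omega
      subst this
      exact (mem_TYs k T i).1 hi0
  · intro h
    exact Or.inr ⟨i.1+1, (mem_TYs k T i).2 h, Or.inl (by push_cast; ring)⟩

lemma main (k u v r s ε η : ℕ) (z : Bool) (hk : 1 ≤ k) (hrs : r + s + 1 = k)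
    (hε : ε ≤ 1) (hη : η ≤ 1) (hmod : (ε + η) % 2 = (u + v) % 2)
    (hz : z = true ↔ v % 2 = η % 2) :
    Nat.card (RedSol (2*k+u+v) u v (2*r+1) (2*s+1) ε η) = (k-1).choose r := by
  have hbij : Function.Bijective
      (fun T : {T : Finset (Fin (k-1)) // T.card = r} =>
        mkSol k u v r s ε η z hk hrs hε hη hmod hz T.1 T.2) := by
    constructor
    · intro T1 T2 h
      apply Subtype.ext
      have h1 : Finset.univ.image (mkSol k u v r s ε η z hk hrs hε hη hmod hz T1.1 T1.2).y =
          slotSet ((u:ℤ)+v) k z (TYs k T1.1) := by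
        show Finset.univ.image (yF k u v r z T1.1 T1.2) = _
        unfold yF
        exact sE_image _ _ _ _ _ _
      have h2 : Finset.univ.image (mkSol k u v r s ε η z hk hrs hε hη hmod hz T2.1 T2.2).y =
          slotSet ((u:ℤ)+v) k z (TYs k T2.1) := by
        show Finset.univ.image (yF k u v r z T2.1 T2.2) = _
        unfold yF
        exact sE_image _ _ _ _ _ _
      have himg : slotSet ((u:ℤ)+v) k z (TYs k T1.1) = slotSet ((u:ℤ)+v) k z (TYs k T2.1) := by
        rw [← h1, ← h2]
        exact congrArg (fun sol => Finset.univ.image sol.y) h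
      ext i
      rw [← mem_slot_pair k u v z hk T1.1 i, ← mem_slot_pair k u v z hk T2.1 i, himg]
    · intro sol
      refine ⟨⟨Tof sol, Tof_card sol hmod hz hk hrs⟩, ?_⟩
      set msol := mkSol k u v r s ε η z hk hrs hε hη hmod hz (Tof sol)
        (Tof_card sol hmod hz hk hrs) with hmsol
      have hyimg : Finset.univ.image msol.y = Finset.univ.image sol.y := by
        show Finset.univ.image (yF k u v r z (Tof sol) (Tof_card sol hmod hz hk hrs)) = _
        unfold yF
        rw [sE_image, ← img_eq sol hmod hz hk hrs]
      have hyeq : msol.y = sol.y :=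
        strictAnti_eq_of_image_eq msol.y_anti sol.y_anti hyimg
      have hxieq : Finset.univ.image msol.x = Finset.univ.image sol.x :=
        compl_eq (hIcc msol) (hIcc sol) msol.disj sol.disj hyimg
      have hxeq : msol.x = sol.x :=
        strictAnti_eq_of_image_eq msol.x_anti sol.x_anti hxieq
      refine RedSol_ext hxeq hyeq ?_ ?_
      · funext i
        have e1 := msol.hx i
        have e2 := sol.hx i
        have e3 := congrFun hxeq i
        linarith
      · funext j
        have e1 := msol.hy j
        have e2 := sol.hy j
        have e3 := congrFun hyeq j
        linarith
  rw [← Nat.card_eq_of_bijective _ hbij, Nat.card_eq_fintype_card,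
    Fintype.card_finset_len, Fintype.card_fin]

end RSAux

/-- Case 2 I of the main theorem for Sp(2n,ℝ): `p, q` odd, `ε+η ≡ n (mod 2)`;
the number of reduced solutions is `C(k−1, (p−1)/2) = C(k−1, (q−1)/2)`. -/
theorem stmt11 (n k u v p q ε η : ℕ) (hk : 1 ≤ k) (hn : 2 * k + u + v = n)
    (hpq : p + q = 2 * k) (hε : ε ≤ 1) (hη : η ≤ 1)
    (hpo : p % 2 = 1) (hqo : q % 2 = 1)
    (hmod : (ε + η) % 2 = n % 2) :
    Nat.card (RedSol n u v p q ε η) = Nat.choose (k - 1) ((p - 1) / 2) ∧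
    Nat.choose (k - 1) ((p - 1) / 2) = Nat.choose (k - 1) ((q - 1) / 2) := by
  obtain ⟨r, hr⟩ : ∃ r, p = 2*r+1 := ⟨(p-1)/2, by omega⟩
  obtain ⟨s, hs⟩ : ∃ s, q = 2*s+1 := ⟨(q-1)/2, by omega⟩
  subst hr hs
  subst hn
  have hrs : r + s + 1 = k := by omega
  have hmod' : (ε + η) % 2 = (u + v) % 2 := by omega
  have hd1 : (2*r+1-1)/2 = r := by omega
  have hd2 : (2*s+1-1)/2 = s := by omega
  rw [hd1, hd2]
  constructor
  · by_cases hv : v % 2 = η % 2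
    · exact RSAux.main k u v r s ε η true hk hrs hε hη hmod' (by simp [hv])
    · exact RSAux.main k u v r s ε η false hk hrs hε hη hmod' (by simp [hv])
  · rw [show s = k-1-r from by omega, Nat.choose_symm (by omega)]
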